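/- Let k ≥ 1 be an integer and s > 1 a real number, and let f(x) = (x^{1/k}·(x + (1-x)·(1 - 1/s)) + (1-x)·(1/s))^k be the BSBF iteration map. Let X : ℕ → ℝ satisfy 0 ≤ X 0 ≤ 1 and X (n+1) = f(X n) for all n. Then the sequence X is monotonically nondecreasing and converges to 1 (i.e., X n → 1 as n → ∞). -/

import Mathlib

open Filter Topology

/-- **BSBF convergence.** For the BSBF iteration map
`f x = (x^(1/k) * (x + (1-x)*(1 - 1/s)) + (1-x)*(1/s))^k` with `k ≥ 1` and `s > 1`,
any sequence `X` with `0 ≤ X 0 ≤ 1` and `X (n+1) = f (X n)` is monotonically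
nondecreasing and converges to `1`. -/
theorem bsbf_monotone_tendsto_one (k : ℕ) (hk : 1 ≤ k) (s : ℝ) (hs : 1 < s)
    (f : ℝ → ℝ)
    (hf : ∀ x : ℝ,
      f x = (x ^ ((1 : ℝ) / k) * (x + (1 - x) * (1 - 1 / s)) + (1 - x) * (1 / s)) ^ k)
    (X : ℕ → ℝ) (hX0 : 0 ≤ X 0) (hX1 : X 0 ≤ 1)
    (hrec : ∀ n : ℕ, X (n + 1) = f (X n)) :
    Monotone X ∧ Filter.Tendsto X Filter.atTop (nhds 1) := by
  have hkR : (0 : ℝ) < (k : ℝ) := by exact_mod_cast Nat.lt_of_lt_of_le Nat.zero_lt_one hk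
  have hkR' : (k : ℝ) ≠ 0 := ne_of_gt hkR
  have hk0 : k ≠ 0 := by positivity
  have hs0 : (0 : ℝ) < s := lt_trans one_pos hs
  have hs0' : s ≠ 0 := ne_of_gt hs0
  -- key algebraic identity for the inner expression
  have key : ∀ x : ℝ, x ^ ((1 : ℝ) / k) * (x + (1 - x) * (1 - 1 / s)) + (1 - x) * (1 / s)
      = x ^ ((1 : ℝ) / k) + (1 - x) * (1 - x ^ ((1 : ℝ) / k)) / s := by
    intro x
    field_simp
    ring
  -- bounds on f on [0,1]
  have hf_bounds : ∀ x : ℝ, 0 ≤ x → x ≤ 1 → x ≤ f x ∧ f x ≤ 1 := by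
    intro x hx0 hx1
    set t := x ^ ((1 : ℝ) / k) with ht
    have ht0 : 0 ≤ t := Real.rpow_nonneg hx0 _
    have ht1 : t ≤ 1 := Real.rpow_le_one hx0 hx1 (by positivity)
    have htk : t ^ k = x := by
      rw [ht, ← Real.rpow_natCast (x ^ ((1 : ℝ) / k)) k, ← Real.rpow_mul hx0]
      rw [one_div_mul_cancel hkR', Real.rpow_one]
    have hnn : 0 ≤ (1 - x) * (1 - t) / s := by
      have h1 : 0 ≤ 1 - x := by linarith
      have h2 : 0 ≤ 1 - t := by linarith
      positivity
    constructor
    · rw [hf, key, ← ht]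
      calc x = t ^ k := htk.symm
        _ ≤ (t + (1 - x) * (1 - t) / s) ^ k := pow_le_pow_left₀ ht0 (by linarith) k
    · rw [hf, key, ← ht]
      have hle : (1 - x) * (1 - t) / s ≤ 1 - t := by
        have h1 : (1 - x) * (1 - t) / s ≤ (1 - x) * (1 - t) :=
          div_le_self (by nlinarith) (le_of_lt hs)
        nlinarith
      exact pow_le_one₀ (by linarith) (by linarith)
  -- invariant: X n ∈ [0,1]
  have hinv : ∀ n, 0 ≤ X n ∧ X n ≤ 1 := by
    intro n
    induction n with
    | zero => exact ⟨hX0, hX1⟩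
    | succ n ih =>
      obtain ⟨h0, h1⟩ := ih
      obtain ⟨hle, hle1⟩ := hf_bounds _ h0 h1
      exact ⟨le_trans h0 (by rw [hrec n]; exact hle), by rw [hrec n]; exact hle1⟩
  have hmono : Monotone X := monotone_nat_of_le_succ fun n => by
    obtain ⟨h0, h1⟩ := hinv n
    rw [hrec n]
    exact (hf_bounds _ h0 h1).1
  -- convergence to the supremum
  have hbdd : BddAbove (Set.range X) := by
    refine ⟨1, ?_⟩
    rintro y ⟨n, rfl⟩
    exact (hinv n).2
  set L := ⨆ n, X n with hLdef
  have hL : Tendsto X atTop (𝓝 L) := tendsto_atTop_ciSup hmono hbdd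
  have hL0 : 0 ≤ L := le_trans hX0 (le_ciSup hbdd 0)
  have hL1 : L ≤ 1 := ciSup_le fun n => (hinv n).2
  -- continuity of f at L
  have hcont : ContinuousAt f L := by
    have hfun : f = fun x : ℝ =>
        (x ^ ((1 : ℝ) / k) * (x + (1 - x) * (1 - 1 / s)) + (1 - x) * (1 / s)) ^ k :=
      funext hf
    rw [hfun]
    have h1 : ContinuousAt (fun x : ℝ => x ^ ((1 : ℝ) / k)) L :=
      Real.continuousAt_rpow_const L _ (Or.inr (by positivity))
    have h2 : ContinuousAt (fun x : ℝ => x + (1 - x) * (1 - 1 / s)) L := by fun_prop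
    have h3 : ContinuousAt (fun x : ℝ => (1 - x) * (1 / s)) L := by fun_prop
    exact ((h1.mul h2).add h3).pow k
  -- L is a fixed point
  have hfL : f L = L := by
    have h1 : Tendsto (fun n => X (n + 1)) atTop (𝓝 L) :=
      hL.comp (tendsto_add_atTop_nat 1)
    have h2 : Tendsto (fun n => f (X n)) atTop (𝓝 (f L)) := hcont.tendsto.comp hL
    have heq : (fun n => X (n + 1)) = fun n => f (X n) := funext hrec
    rw [heq] at h1
    exact tendsto_nhds_unique h2 h1
  -- the only fixed point in [0,1] is 1
  have hLeq : L = 1 := by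
    set t := L ^ ((1 : ℝ) / k) with htdef
    have ht0 : 0 ≤ t := Real.rpow_nonneg hL0 _
    have ht1 : t ≤ 1 := Real.rpow_le_one hL0 hL1 (by positivity)
    have htk : t ^ k = L := by
      rw [htdef, ← Real.rpow_natCast (L ^ ((1 : ℝ) / k)) k, ← Real.rpow_mul hL0]
      rw [one_div_mul_cancel hkR', Real.rpow_one]
    have hpow : (t + (1 - L) * (1 - t) / s) ^ k = t ^ k := by
      rw [htk]
      have := hf L
      rw [key] at this
      rw [← this, hfL]
    have hnn : 0 ≤ (1 - L) * (1 - t) / s := by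
      have h1 : 0 ≤ 1 - L := by linarith
      have h2 : 0 ≤ 1 - t := by linarith
      positivity
    have hgt : t + (1 - L) * (1 - t) / s = t := by
      by_contra hne
      have hlt : t < t + (1 - L) * (1 - t) / s := lt_of_le_of_ne (by linarith) (Ne.symm hne)
      have := pow_lt_pow_left₀ hlt ht0 hk0
      rw [hpow] at this
      exact lt_irrefl _ this
    have hzero : (1 - L) * (1 - t) = 0 := by
      have : (1 - L) * (1 - t) / s = 0 := by linarith
      field_simp at this
      rwa [mul_zero] at this
    rcases mul_eq_zero.mp hzero with h | h
    · linarith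
    · have : t = 1 := by linarith
      rw [← htk, this, one_pow]
  rw [hLeq] at hL
  exact ⟨hmono, hL⟩
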